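/- Let G be a graph, σ a total order, and k ≥ 2. If for every vertex u, Σ_{v ∈ reach_r(u,G_σ)} (k−1)^{r−d_v} ≤ k·(k−1)^{r−1}, then for every vertex u, |wreach_r(u, G_σ)| ≤ (k^{r+1} − 1)/(k − 1) − 1. -/

import Mathlib

open SimpleGraph

variable {V : Type*}

/-- The strict order relation of a linear order. -/
def olt (σ : LinearOrder V) (a b : V) : Prop := σ.lt a b

/-- The set of vertices `r`-reachable from `u` with respect to `σ`:
vertices `v >_σ u` joined to `u` by a path of length at most `r`
whose internal vertices all precede `u` in `σ`. -/
def reachSet (G : SimpleGraph V) (σ : LinearOrder V) (r : ℕ) (u : V) : Set V :=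
  {v | olt σ u v ∧ ∃ p : G.Walk u v, p.IsPath ∧ p.length ≤ r ∧
    ∀ w ∈ p.support, w ≠ u → w ≠ v → olt σ w u}

/-- The set of vertices weakly `r`-reachable from `u` with respect to `σ`:
vertices `v >_σ u` joined to `u` by a path of length at most `r`
whose internal vertices all precede `v` in `σ`. -/
def wreachSet (G : SimpleGraph V) (σ : LinearOrder V) (r : ℕ) (u : V) : Set V :=
  {v | olt σ u v ∧ ∃ p : G.Walk u v, p.IsPath ∧ p.length ≤ r ∧
    ∀ w ∈ p.support, w ≠ u → w ≠ v → olt σ w v}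

/-- `col_r(G_σ)`: the maximum `r`-reach over all vertices. -/
noncomputable def colOrd [Fintype V] (G : SimpleGraph V) (σ : LinearOrder V) (r : ℕ) : ℕ :=
  Finset.univ.sup fun u => (reachSet G σ r u).ncard

/-- `wcol_r(G_σ)`: the maximum weak `r`-reach over all vertices. -/
noncomputable def wcolOrd [Fintype V] (G : SimpleGraph V) (σ : LinearOrder V) (r : ℕ) : ℕ :=
  Finset.univ.sup fun u => (wreachSet G σ r u).ncard

/-- The `r`-coloring number of `G`. -/
noncomputable def colNum [Fintype V] (G : SimpleGraph V) (r : ℕ) : ℕ :=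
  ⨅ σ : LinearOrder V, colOrd G σ r

/-- The weak `r`-coloring number of `G`. -/
noncomputable def wcolNum [Fintype V] (G : SimpleGraph V) (r : ℕ) : ℕ :=
  ⨅ σ : LinearOrder V, wcolOrd G σ r

/-- `p` is an `r`-qualifying path from `u` with respect to the (possibly partial)
order `lt`: a path of length at most `r` ending at a vertex `v` with `v ≠ u`,
`v` not `<` `u`, all of whose internal vertices are `< u`. -/
def IsQual (G : SimpleGraph V) (lt : V → V → Prop) (r : ℕ) {u v : V} (p : G.Walk u v) : Prop :=
  p.IsPath ∧ p.length ≤ r ∧ v ≠ u ∧ ¬ lt v u ∧ ∀ w ∈ p.support, w ≠ u → w ≠ v → lt w u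

/-- The `r`-backconnectivity of `u`: the maximum number of `r`-qualifying paths from `u`
that are pairwise vertex-disjoint apart from `u`. -/
noncomputable def bcon (G : SimpleGraph V) (lt : V → V → Prop) (r : ℕ) (u : V) : ℕ :=
  sSup {n | ∃ f : Fin n → (v : V) × G.Walk u v,
    (∀ i, IsQual G lt r (f i).2) ∧
    ∀ i j : Fin n, i ≠ j → ∀ w, w ∈ (f i).2.support → w ∈ (f j).2.support → w = u}

/-- A shortest `r`-qualifying path: an `r`-qualifying `u`–`v` path of length `ℓ` such that
there is no `(ℓ-1)`-qualifying `u`–`v` path. -/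
def IsShortQual (G : SimpleGraph V) (lt : V → V → Prop) (r : ℕ) {u v : V} (p : G.Walk u v) :
    Prop :=
  IsQual G lt r p ∧ ¬ ∃ q : G.Walk u v, IsQual G lt (p.length - 1) q

/-- The estimated `r`-backconnectivity of `u`: the maximum number of shortest
`r`-qualifying paths from `u` that are pairwise vertex-disjoint apart from `u`. -/
noncomputable def est (G : SimpleGraph V) (lt : V → V → Prop) (r : ℕ) (u : V) : ℕ :=
  sSup {n | ∃ f : Fin n → (v : V) × G.Walk u v,
    (∀ i, IsShortQual G lt r (f i).2) ∧
    ∀ i j : Fin n, i ≠ j → ∀ w, w ∈ (f i).2.support → w ∈ (f j).2.support → w = u}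

/-- The `r`-admissibility of `G`. -/
noncomputable def admNum [Fintype V] (G : SimpleGraph V) (r : ℕ) : ℕ :=
  ⨅ σ : LinearOrder V, Finset.univ.sup fun u => bcon G (olt σ) r u

/-- `d_v(u, G_σ)`: the least `i` such that `v` is `i`-reachable from `u`. -/
noncomputable def dval (G : SimpleGraph V) (σ : LinearOrder V) (u v : V) : ℕ :=
  sInf {i | v ∈ reachSet G σ i u}


lemma olt_irrefl (σ : LinearOrder V) (a : V) : ¬ olt σ a a := by
  letI := σ; exact lt_irrefl a

lemma olt_of_not_olt {σ : LinearOrder V} {a b : V} (h : ¬ olt σ a b) (hne : b ≠ a) :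
    olt σ b a := by
  letI := σ; exact (lt_or_gt_of_ne hne).resolve_right h

lemma olt_trans {σ : LinearOrder V} {a b c : V} (h1 : olt σ a b) (h2 : olt σ b c) :
    olt σ a c := by
  letI := σ; exact lt_trans h1 h2

lemma olt_ne {σ : LinearOrder V} {a b : V} (h : olt σ a b) : a ≠ b := by
  letI := σ; exact ne_of_lt h

lemma split_walk {G : SimpleGraph V} (σ : LinearOrder V) (u₀ : V) :
    ∀ {a v : V} (p : G.Walk a v), ¬ olt σ u₀ a → olt σ u₀ v →
    ∃ (x : V) (q : G.Walk a x) (s : G.Walk x v),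
      olt σ u₀ x ∧ 1 ≤ q.length ∧ q.append s = p ∧
      (∀ w ∈ q.support, w ≠ x → ¬ olt σ u₀ w) := by
  intro a v p
  induction p with
  | nil => intro ha hv; exact absurd hv ha
  | @cons a b v h p' ih =>
    intro ha hv
    by_cases hb : olt σ u₀ b
    · refine ⟨b, Walk.cons h Walk.nil, p', hb, by simp, rfl, ?_⟩
      intro w hw hwx
      simp only [Walk.support_cons, Walk.support_nil, List.mem_cons, List.mem_singleton] at hw
      rcases hw with rfl | hw
      · exact ha
      · rcases hw with rfl | h0
        · exact absurd rfl hwx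
        · exact absurd h0 List.not_mem_nil
    · obtain ⟨x, q, s, hx, hq1, hqs, hqsup⟩ := ih hb hv
      refine ⟨x, Walk.cons h q, s, hx, by simp, by rw [Walk.cons_append, hqs], ?_⟩
      intro w hw hwx
      rw [Walk.support_cons] at hw
      rcases List.mem_cons.mp hw with rfl | hw
      · exact ha
      · exact hqsup w hw hwx

lemma reachSet_zero (G : SimpleGraph V) (σ : LinearOrder V) (u : V) :
    reachSet G σ 0 u = ∅ := by
  ext v
  simp only [reachSet, Set.mem_setOf_eq, Set.mem_empty_iff_false, iff_false, not_and]
  rintro huv ⟨p, _, hl, _⟩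
  have : u = v := p.eq_of_length_eq_zero (Nat.le_zero.mp hl)
  exact olt_irrefl σ u (this ▸ huv)

lemma wreachSet_zero (G : SimpleGraph V) (σ : LinearOrder V) (u : V) :
    wreachSet G σ 0 u = ∅ := by
  ext v
  simp only [wreachSet, Set.mem_setOf_eq, Set.mem_empty_iff_false, iff_false, not_and]
  rintro huv ⟨p, _, hl, _⟩
  have : u = v := p.eq_of_length_eq_zero (Nat.le_zero.mp hl)
  exact olt_irrefl σ u (this ▸ huv)

lemma wreachSet_mono {G : SimpleGraph V} {σ : LinearOrder V} {m n : ℕ} (h : m ≤ n) (u : V) :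
    wreachSet G σ m u ⊆ wreachSet G σ n u := by
  rintro v ⟨h1, p, hp, hl, hw⟩
  exact ⟨h1, p, hp, hl.trans h, hw⟩

lemma dval_facts {G : SimpleGraph V} {σ : LinearOrder V} {r : ℕ} {u x : V}
    (hx : x ∈ reachSet G σ r u) :
    1 ≤ dval G σ u x ∧ dval G σ u x ≤ r ∧ x ∈ reachSet G σ (dval G σ u x) u := by
  have hne : {i | x ∈ reachSet G σ i u}.Nonempty := ⟨r, hx⟩
  have hmem : x ∈ reachSet G σ (dval G σ u x) u := Nat.sInf_mem hne
  have hle : dval G σ u x ≤ r := Nat.sInf_le hx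
  refine ⟨?_, hle, hmem⟩
  by_contra h0
  have : dval G σ u x = 0 := by omega
  rw [this, reachSet_zero] at hmem
  exact hmem

lemma wreach_decomp {G : SimpleGraph V} {σ : LinearOrder V} {r : ℕ} {u v : V}
    (hv : v ∈ wreachSet G σ r u) :
    ∃ x ∈ reachSet G σ r u, v = x ∨ v ∈ wreachSet G σ (r - dval G σ u x) x := by
  obtain ⟨huv, p, hp, hl, hint⟩ := hv
  obtain ⟨x, q, s, hux, hq1, hqs, hqsup⟩ := split_walk σ u p (olt_irrefl σ u) huv
  have hpqs : (q.append s).IsPath := hqs ▸ hp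
  have hqP : q.IsPath := hpqs.of_append_left
  have hsP : s.IsPath := hpqs.of_append_right
  have hlen : q.length + s.length = p.length := by rw [← hqs, Walk.length_append]
  have hxu : x ≠ u := fun hh => olt_irrefl σ u (hh ▸ hux)
  have hqint : ∀ w ∈ q.support, w ≠ u → w ≠ x → olt σ w u := fun w hw hwu hwx =>
    olt_of_not_olt (hqsup w hw hwx) hwu
  have hxr : x ∈ reachSet G σ r u := ⟨hux, q, hqP, by omega, hqint⟩
  obtain ⟨hd1, hdr, _⟩ := dval_facts hxr
  have hdq : dval G σ u x ≤ q.length :=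
    Nat.sInf_le (⟨hux, q, hqP, le_rfl, hqint⟩ : x ∈ reachSet G σ q.length u)
  refine ⟨x, hxr, ?_⟩
  by_cases hxv : x = v
  · exact Or.inl hxv.symm
  · right
    have hxsupp : x ∈ p.support := by
      rw [← hqs, Walk.mem_support_append_iff]
      exact Or.inl q.end_mem_support
    have hxltv : olt σ x v := hint x hxsupp hxu hxv
    have hdisj : q.support.Disjoint s.support.tail := by
      have hnd : (q.support ++ s.support.tail).Nodup := by
        rw [← Walk.support_append]
        exact hpqs.support_nodup
      exact List.disjoint_of_nodup_append hnd
    refine ⟨hxltv, s, hsP, by omega, ?_⟩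
    intro w hw hwx hwv
    have hwtail : w ∈ s.support.tail := by
      rw [s.support_eq_cons] at hw
      exact (List.mem_cons.mp hw).resolve_left hwx
    have hwp : w ∈ p.support := by
      rw [← hqs, Walk.mem_support_append_iff]
      exact Or.inr hw
    have hwu : w ≠ u := by
      rintro rfl
      exact hdisj q.start_mem_support hwtail
    exact hint w hwp hwu hwv


lemma range_split {k m : ℕ} :
    ∑ i ∈ Finset.range (m + 1), k ^ i = 1 + ∑ i ∈ Finset.Ico 1 (m + 1), k ^ i := by
  rw [Finset.range_eq_Ico, Finset.sum_eq_sum_Ico_succ_bot (Nat.succ_pos m)]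
  simp


lemma geom_nat {k : ℕ} (hk : 1 ≤ k) (n : ℕ) :
    (k - 1) * ∑ i ∈ Finset.range n, k ^ i = k ^ n - 1 := by
  induction n with
  | zero => simp
  | succ n ih =>
    rw [Finset.sum_range_succ, Nat.mul_add, ih, Nat.sub_mul, one_mul, ← pow_succ']
    have h1 : 1 ≤ k ^ n := Nat.one_le_pow _ _ (by omega)
    have h2 : k ^ n ≤ k ^ (n + 1) := Nat.pow_le_pow_right (by omega) (by omega)
    omega

lemma Tstep {k : ℕ} (hk : 2 ≤ k) (m : ℕ) : ∀ j : ℕ,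
    (∑ i ∈ Finset.range (m + 1), k ^ i) * (k - 1) ^ j
      ≤ ∑ i ∈ Finset.range (m + j + 1), k ^ i := by
  intro j
  induction j with
  | zero => simp
  | succ j ih =>
    have step : (∑ i ∈ Finset.range (m + j + 1), k ^ i) * k
        ≤ ∑ i ∈ Finset.range (m + (j + 1) + 1), k ^ i := by
      have : m + (j + 1) + 1 = (m + j + 1) + 1 := by ring
      rw [this]
      conv_rhs => rw [geom_sum_succ]
      rw [mul_comm]
      exact Nat.le_succ _
    calc (∑ i ∈ Finset.range (m + 1), k ^ i) * (k - 1) ^ (j + 1)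
        = ((∑ i ∈ Finset.range (m + 1), k ^ i) * (k - 1) ^ j) * (k - 1) := by ring
      _ ≤ (∑ i ∈ Finset.range (m + j + 1), k ^ i) * (k - 1) :=
          Nat.mul_le_mul_right _ ih
      _ ≤ (∑ i ∈ Finset.range (m + j + 1), k ^ i) * k :=
          Nat.mul_le_mul_left _ (by omega)
      _ ≤ _ := step

lemma Tterm {k : ℕ} (hk : 2 ≤ k) {m n : ℕ} (hmn : m ≤ n) :
    (∑ i ∈ Finset.range (m + 1), k ^ i) * (k - 1) ^ n
      ≤ (∑ i ∈ Finset.range (n + 1), k ^ i) * (k - 1) ^ m := by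
  obtain ⟨j, rfl⟩ : ∃ j, n = m + j := ⟨n - m, by omega⟩
  calc (∑ i ∈ Finset.range (m + 1), k ^ i) * (k - 1) ^ (m + j)
      = ((∑ i ∈ Finset.range (m + 1), k ^ i) * (k - 1) ^ j) * (k - 1) ^ m := by
        rw [pow_add]; ring
    _ ≤ (∑ i ∈ Finset.range (m + j + 1), k ^ i) * (k - 1) ^ m :=
        Nat.mul_le_mul_right _ (Tstep hk m j)

lemma Ico_eq {k r : ℕ} (hr : 1 ≤ r) :
    ∑ i ∈ Finset.Ico 1 (r + 1), k ^ i = k * ∑ i ∈ Finset.range (r - 1 + 1), k ^ i := by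
  have h1 : r - 1 + 1 = r := by omega
  rw [h1]
  have hA : ∑ i ∈ Finset.range (r + 1), k ^ i
      = (k * ∑ i ∈ Finset.range r, k ^ i) + 1 := geom_sum_succ
  have h2 : ∑ i ∈ Finset.range (r + 1), k ^ i
      = 1 + ∑ i ∈ Finset.Ico 1 (r + 1), k ^ i := by
    rw [Finset.range_eq_Ico, Finset.sum_eq_sum_Ico_succ_bot (by omega)]
    simp
  omega

lemma sum_T_le {α : Type*} {R : Finset α} {d : α → ℕ} {r k : ℕ} (hk : 2 ≤ k) (hr : 1 ≤ r)
    (hd : ∀ x ∈ R, 1 ≤ d x ∧ d x ≤ r)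
    (hsum : ∑ x ∈ R, (k - 1) ^ (r - d x) ≤ k * (k - 1) ^ (r - 1)) :
    ∑ x ∈ R, (∑ i ∈ Finset.range (r - d x + 1), k ^ i)
      ≤ ∑ i ∈ Finset.Ico 1 (r + 1), k ^ i := by
  have hpos : 0 < (k - 1) ^ (r - 1) := pow_pos (by omega) _
  apply Nat.le_of_mul_le_mul_right _ hpos
  calc (∑ x ∈ R, ∑ i ∈ Finset.range (r - d x + 1), k ^ i) * (k - 1) ^ (r - 1)
      = ∑ x ∈ R, (∑ i ∈ Finset.range (r - d x + 1), k ^ i) * (k - 1) ^ (r - 1) :=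
        Finset.sum_mul _ _ _
    _ ≤ ∑ x ∈ R, (∑ i ∈ Finset.range (r - 1 + 1), k ^ i) * (k - 1) ^ (r - d x) :=
        Finset.sum_le_sum fun x hx => Tterm hk (by have := hd x hx; omega)
    _ = (∑ i ∈ Finset.range (r - 1 + 1), k ^ i) * ∑ x ∈ R, (k - 1) ^ (r - d x) := by
        rw [Finset.mul_sum]
    _ ≤ (∑ i ∈ Finset.range (r - 1 + 1), k ^ i) * (k * (k - 1) ^ (r - 1)) :=
        Nat.mul_le_mul_left _ hsum
    _ = (k * ∑ i ∈ Finset.range (r - 1 + 1), k ^ i) * (k - 1) ^ (r - 1) := by ring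
    _ = (∑ i ∈ Finset.Ico 1 (r + 1), k ^ i) * (k - 1) ^ (r - 1) := by rw [Ico_eq hr]

theorem reach_sum_bound_implies_wreach_bound [Fintype V] (G : SimpleGraph V)
    (σ : LinearOrder V) (r k : ℕ) (hk : 2 ≤ k)
    (h : ∀ r' ≤ r, ∀ u,
      (∑ᶠ v ∈ reachSet G σ r' u, (k - 1) ^ (r' - dval G σ u v)) ≤ k * (k - 1) ^ (r' - 1)) :
    ∀ u, (wreachSet G σ r u).ncard ≤ (k ^ (r + 1) - 1) / (k - 1) - 1 := by
  classical
  have key : ∀ n : ℕ, (∀ r' ≤ n, ∀ u,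
        (∑ᶠ v ∈ reachSet G σ r' u, (k - 1) ^ (r' - dval G σ u v)) ≤ k * (k - 1) ^ (r' - 1)) →
      ∀ u, (wreachSet G σ n u).ncard ≤ ∑ i ∈ Finset.Ico 1 (n + 1), k ^ i := by
    intro n
    induction n using Nat.strong_induction_on with
    | _ n ih =>
      intro hh u
      rcases Nat.eq_zero_or_pos n with rfl | hn
      · rw [wreachSet_zero]; simp
      · have hRfin : (reachSet G σ n u).Finite := Set.toFinite _
        set R : Finset V := hRfin.toFinset with hR
        have hWfin : (wreachSet G σ n u).Finite := Set.toFinite _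
        set F : V → Finset V := fun x =>
          insert x (Set.toFinite (wreachSet G σ (n - dval G σ u x) x)).toFinset with hF
        have hsub : hWfin.toFinset ⊆ R.biUnion F := by
          intro v hv
          rw [Set.Finite.mem_toFinset] at hv
          obtain ⟨x, hx, hcase⟩ := wreach_decomp hv
          refine Finset.mem_biUnion.mpr ⟨x, hRfin.mem_toFinset.mpr hx, ?_⟩
          rcases hcase with rfl | hvw
          · exact Finset.mem_insert_self _ _
          · exact Finset.mem_insert_of_mem ((Set.Finite.mem_toFinset _).mpr hvw)
        have hcard : (wreachSet G σ n u).ncard ≤ ∑ x ∈ R, (F x).card := by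
          rw [Set.ncard_eq_toFinset_card _ hWfin]
          exact le_trans (Finset.card_le_card hsub) Finset.card_biUnion_le
        have hFx : ∀ x ∈ R, (F x).card ≤ ∑ i ∈ Finset.range (n - dval G σ u x + 1), k ^ i := by
          intro x hx
          rw [hR, Set.Finite.mem_toFinset] at hx
          obtain ⟨hd1, hdn, _⟩ := dval_facts hx
          have ihx : (wreachSet G σ (n - dval G σ u x) x).ncard
              ≤ ∑ i ∈ Finset.Ico 1 (n - dval G σ u x + 1), k ^ i := by
            apply ih (n - dval G σ u x) (by omega)
            intro r' hr' u'
            exact hh r' (by omega) u'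
          have hcardw : (Set.toFinite (wreachSet G σ (n - dval G σ u x) x)).toFinset.card
              = (wreachSet G σ (n - dval G σ u x) x).ncard :=
            (Set.ncard_eq_toFinset_card _ _).symm
          calc (F x).card
              ≤ (Set.toFinite (wreachSet G σ (n - dval G σ u x) x)).toFinset.card + 1 :=
                Finset.card_insert_le _ _
            _ ≤ (∑ i ∈ Finset.Ico 1 (n - dval G σ u x + 1), k ^ i) + 1 := by
                rw [hcardw]; omega
            _ = ∑ i ∈ Finset.range (n - dval G σ u x + 1), k ^ i := by
                rw [range_split]; omega
        have hsum := hh n le_rfl u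
        rw [finsum_mem_eq_finite_toFinset_sum _ hRfin] at hsum
        have harith := sum_T_le (d := fun x => dval G σ u x) hk hn
          (fun x hx => by
            rw [Set.Finite.mem_toFinset] at hx
            exact ⟨(dval_facts hx).1, (dval_facts hx).2.1⟩) hsum
        calc (wreachSet G σ n u).ncard ≤ ∑ x ∈ R, (F x).card := hcard
          _ ≤ ∑ x ∈ R, ∑ i ∈ Finset.range (n - dval G σ u x + 1), k ^ i :=
              Finset.sum_le_sum hFx
          _ ≤ _ := harith
  intro u
  have hkey := key r h u
  have hgeo : (k ^ (r + 1) - 1) / (k - 1) = ∑ i ∈ Finset.range (r + 1), k ^ i :=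
    Nat.div_eq_of_eq_mul_left (by omega)
      (by rw [← geom_nat (by omega : 1 ≤ k) (r + 1)]; ring)
  rw [hgeo, range_split]
  omega
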